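/- Let w : ℝ² → ℝ be a differentiable choice welfare function (monotone, translation invariant, convex) in two variables. Then there exists a Borel probability measure θ on ℝ² (possibly assigning mass to points with coordinates equal to −∞, i.e., a probability measure on the extended plane) such that w(μ₁, μ₂) = E_θ[max{μ₁ + ε₁, μ₂ + ε₂}] for all (μ₁, μ₂) ∈ ℝ². Moreover, if w is superlinear, then θ can be chosen to be a Borel probability measure on ℝ² with E_θ|ε₁| < ∞ and E_θ|ε₂| < ∞. -/

import Mathlib

open scoped BigOperators
open MeasureTheory Set
open scoped ENNReal NNReal

noncomputable section

/-- The simplex Δ_{n-1} in ℝⁿ. -/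
def choiceSimplex (n : ℕ) : Set (Fin n → ℝ) :=
  {x | (∀ i, 0 ≤ x i) ∧ ∑ i, x i = 1}

/-- A choice welfare function: monotone, translation invariant, convex. -/
def IsCWF {n : ℕ} (w : (Fin n → ℝ) → ℝ) : Prop :=
  (∀ μ₁ μ₂ : Fin n → ℝ, μ₂ ≤ μ₁ → w μ₂ ≤ w μ₁) ∧
  (∀ (μ : Fin n → ℝ) (t : ℝ), w (μ + fun _ => t) = w μ + t) ∧
  ConvexOn ℝ Set.univ w

namespace CWAux

/-- generalized inverse of `F` -/
def Phi (F : ℝ → ℝ) (u : ℝ) : EReal := sInf {x : EReal | ∃ v : ℝ, x = (v : EReal) ∧ u < F v}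

variable {F : ℝ → ℝ}

lemma phi_mono : Monotone (Phi F) := by
  intro u u' h
  apply sInf_le_sInf
  rintro x ⟨v, rfl, hv⟩
  exact ⟨v, rfl, lt_of_le_of_lt h hv⟩

lemma le_phi {u v : ℝ} (hF : Monotone F) (h : F v ≤ u) : (v : EReal) ≤ Phi F u := by
  apply le_sInf
  rintro x ⟨v', rfl, hv'⟩
  by_contra hc
  push_neg at hc
  have : v' < v := by exact_mod_cast hc
  exact absurd (lt_of_lt_of_le hv' (hF this.le)) (not_lt.2 h)

lemma phi_le {u v : ℝ} (h : u < F v) : Phi F u ≤ (v : EReal) :=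
  sInf_le ⟨v, rfl, h⟩

lemma lt_of_phi_lt {u v : ℝ} (hF : Monotone F) (h : Phi F u < (v : EReal)) : u < F v := by
  obtain ⟨x, ⟨v', rfl, hv'⟩, hx⟩ := sInf_lt_iff.1 h
  have : v' ≤ v := by exact_mod_cast hx.le
  exact lt_of_lt_of_le hv' (hF this)

lemma le_of_lt_phi {u v : ℝ} (h : (v : EReal) < Phi F u) : F v ≤ u := by
  by_contra hc
  push_neg at hc
  exact absurd (phi_le hc) (not_le.2 h)

/-- The derivative of a differentiable convex function on ℝ is continuous. -/
lemma continuous_deriv_of_convex {g : ℝ → ℝ} (hconv : ConvexOn ℝ Set.univ g)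
    (hg : Differentiable ℝ g) : Continuous (deriv g) := by
  have hmono : Monotone (deriv g) :=
    monotoneOn_univ.1 (hconv.monotoneOn_deriv fun x _ => hg x)
  have hgc : Continuous g := hg.continuous
  rw [continuous_iff_continuousAt]
  intro t
  rw [Metric.continuousAt_iff]
  intro ε hε
  -- slope tends to deriv at t
  have hslope : Filter.Tendsto (slope g t) (nhdsWithin t {t}ᶜ) (nhds (deriv g t)) :=
    hasDerivAt_iff_tendsto_slope.1 (hg t).hasDerivAt
  have hev : ∀ᶠ x in nhdsWithin t {t}ᶜ, |slope g t x - deriv g t| < ε / 2 := by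
    have := hslope (Metric.ball_mem_nhds (deriv g t) (show (0:ℝ) < ε/2 by positivity))
    filter_upwards [this] with x hx
    simpa [Real.dist_eq] using hx
  -- pick r < t with slope close
  obtain ⟨r, hrt, hr⟩ : ∃ r, r < t ∧ |slope g t r - deriv g t| < ε / 2 := by
    have h1 : ∀ᶠ x in nhdsWithin t (Set.Iio t), |slope g t x - deriv g t| < ε / 2 :=
      nhdsWithin_mono t (fun x (hx : x < t) => ne_of_lt hx) hev
    obtain ⟨r, hr1, hr2⟩ := (h1.and self_mem_nhdsWithin).exists
    exact ⟨r, hr2, hr1⟩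
  obtain ⟨r', hrt', hr'⟩ : ∃ r', t < r' ∧ |slope g t r' - deriv g t| < ε / 2 := by
    have h1 : ∀ᶠ x in nhdsWithin t (Set.Ioi t), |slope g t x - deriv g t| < ε / 2 :=
      nhdsWithin_mono t (fun x (hx : t < x) => ne_of_gt hx) hev
    obtain ⟨r', hr1, hr2⟩ := (h1.and self_mem_nhdsWithin).exists
    exact ⟨r', hr2, hr1⟩
  -- slope g r · is continuous at t
  have hc1 : ContinuousAt (fun s => slope g r s) t := by
    have he : (fun s => slope g r s) = fun s => (g s - g r) / (s - r) := by
      funext s; rw [slope_def_field]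
    rw [he]
    exact (hgc.continuousAt.sub continuousAt_const).div
      (continuousAt_id.sub continuousAt_const) (sub_ne_zero.2 (ne_of_gt hrt))
  have hc2 : ContinuousAt (fun s => slope g s r') t := by
    have he : (fun s => slope g s r') = fun s => (g r' - g s) / (r' - s) := by
      funext s; rw [slope_def_field]
    rw [he]
    exact (continuousAt_const.sub hgc.continuousAt).div
      (continuousAt_const.sub continuousAt_id) (sub_ne_zero.2 (ne_of_gt hrt'))
  have h1 : ∀ᶠ s in nhds t, slope g r s > slope g r t - ε / 2 := by
    have := hc1 (Metric.ball_mem_nhds _ (show 0 < ε/2 by positivity)) -- preimage ball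
    filter_upwards [this] with s hs
    have : |slope g r s - slope g r t| < ε / 2 := by simpa [Real.dist_eq] using hs
    linarith [abs_lt.1 this |>.1]
  have h2 : ∀ᶠ s in nhds t, slope g s r' < slope g t r' + ε / 2 := by
    have := hc2 (Metric.ball_mem_nhds _ (show 0 < ε/2 by positivity))
    filter_upwards [this] with s hs
    have : |slope g s r' - slope g t r'| < ε / 2 := by simpa [Real.dist_eq] using hs
    linarith [abs_lt.1 this |>.2]
  have h3 : ∀ᶠ s in nhds t, s ∈ Set.Ioo r r' := Ioo_mem_nhds hrt hrt'
  obtain ⟨δ, hδ, hball⟩ := Metric.eventually_nhds_iff_ball.1 ((h1.and h2).and h3)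
  refine ⟨δ, hδ, fun {s} hs => ?_⟩
  obtain ⟨⟨hs1, hs2⟩, hs3, hs4⟩ := hball s hs
  rw [Real.dist_eq]
  rw [abs_lt]
  have hslope_tr : slope g t r = slope g r t := slope_comm g t r
  constructor
  · -- deriv g s > deriv g t - ε
    rcases le_or_gt t s with h | h
    · have := hmono h; linarith
    · -- s < t: deriv g s ≥ slope g r s > slope g r t - ε/2 > deriv g t - ε
      have hrs : r < s := hs3
      have hA : slope g r s ≤ deriv g s :=
        hconv.slope_le_deriv (Set.mem_univ r) (Set.mem_univ s) hrs (hg s)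
      have hB : |slope g r t - deriv g t| < ε / 2 := by rwa [hslope_tr] at hr
      have := abs_lt.1 hB
      linarith
  · rcases le_or_gt s t with h | h
    · have := hmono h; linarith
    · have hsr' : s < r' := hs4
      have hA : deriv g s ≤ slope g s r' :=
        hconv.deriv_le_slope (Set.mem_univ s) (Set.mem_univ r') hsr' (hg s)
      have hB : |slope g t r' - deriv g t| < ε / 2 := hr'
      have := abs_lt.1 hB
      linarith


section Maps

variable (F : ℝ → ℝ) (g0 : ℝ)

def s0 (u : ℝ) : ℝ := (Phi F u).toReal

def mneg (u : ℝ) : ℝ := max (-s0 F u) 0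

/-- the integrand value at `(t, 0)` -/
def Vr (t u : ℝ) : ℝ :=
  if Phi F u = ⊥ then t + g0
  else if Phi F u = ⊤ then g0
  else g0 - mneg F u + max (t - s0 F u) 0

/-- the EReal-valued noise map -/
def emap (u : ℝ) : Fin 2 → EReal :=
  if Phi F u = ⊥ then ![(g0 : EReal), ⊥]
  else if Phi F u = ⊤ then ![⊥, (g0 : EReal)]
  else ![((g0 - s0 F u - mneg F u : ℝ) : EReal), ((g0 - mneg F u : ℝ) : EReal)]

/-- the real-valued noise map -/
def emap' (u : ℝ) : Fin 2 → ℝ := ![g0 - s0 F u - mneg F u, g0 - mneg F u]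

variable {F g0}

lemma eval_emap (μ : Fin 2 → ℝ) (u : ℝ) :
    (max ((μ 0 : EReal) + emap F g0 u 0) ((μ 1 : EReal) + emap F g0 u 1)).toReal
      = μ 1 + Vr F g0 (μ 0 - μ 1) u := by
  unfold emap Vr
  by_cases h1 : Phi F u = ⊥
  · rw [if_pos h1, if_pos h1]
    simp only [Matrix.cons_val_zero, Matrix.cons_val_one, Matrix.head_cons]
    rw [EReal.add_bot, max_eq_left bot_le, ← EReal.coe_add, EReal.toReal_coe]
    ring
  · by_cases h2 : Phi F u = ⊤
    · rw [if_neg h1, if_neg h1, if_pos h2, if_pos h2]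
      simp only [Matrix.cons_val_zero, Matrix.cons_val_one, Matrix.head_cons]
      rw [EReal.add_bot, max_eq_right bot_le, ← EReal.coe_add, EReal.toReal_coe]
    · rw [if_neg h1, if_neg h1, if_neg h2, if_neg h2]
      simp only [Matrix.cons_val_zero, Matrix.cons_val_one, Matrix.head_cons]
      rw [← EReal.coe_add, ← EReal.coe_add,
        ← Monotone.map_max (f := (fun x : ℝ => (x : EReal))) (fun a b hab => EReal.coe_le_coe_iff.2 hab),
        EReal.toReal_coe]
      rcases max_cases (μ 0 + (g0 - s0 F u - mneg F u)) (μ 1 + (g0 - mneg F u)) with ⟨he, hc⟩ | ⟨he, hc⟩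
      · rw [he, max_eq_left (by linarith)]
        ring
      · rw [he, max_eq_right (by linarith)]
        ring

lemma abs_Vr_le (t u : ℝ) : |Vr F g0 t u| ≤ |g0| + |t| := by
  unfold Vr
  split_ifs with h1 h2
  · calc |t + g0| ≤ |t| + |g0| := abs_add_le _ _
      _ = |g0| + |t| := by ring
  · simp [abs_nonneg]
  · have hm : mneg F u = max (0 - s0 F u) 0 := by unfold mneg; ring_nf
    have hb : |max (t - s0 F u) 0 - max (0 - s0 F u) 0| ≤ |t - s0 F u - (0 - s0 F u)| :=
      abs_max_sub_max_le_abs (t - s0 F u) (0 - s0 F u) 0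
    have hb' : |max (t - s0 F u) 0 - max (0 - s0 F u) 0| ≤ |t| := by
      calc |max (t - s0 F u) 0 - max (0 - s0 F u) 0| ≤ |t - s0 F u - (0 - s0 F u)| := hb
        _ = |t| := by ring_nf
    rw [hm]
    have he : g0 - max (0 - s0 F u) 0 + max (t - s0 F u) 0
        = g0 + (max (t - s0 F u) 0 - max (0 - s0 F u) 0) := by ring
    rw [he]
    calc |g0 + (max (t - s0 F u) 0 - max (0 - s0 F u) 0)|
        ≤ |g0| + |max (t - s0 F u) 0 - max (0 - s0 F u) 0| := abs_add_le _ _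
      _ ≤ |g0| + |t| := by linarith

lemma lipschitz_Vr (u : ℝ) : LipschitzWith 1 (fun t => Vr F g0 t u) := by
  apply LipschitzWith.of_dist_le_mul
  intro a b
  rw [Real.dist_eq, Real.dist_eq, NNReal.coe_one, one_mul]
  unfold Vr
  split_ifs with h1 h2
  · have he : a + g0 - (b + g0) = a - b := by ring
    rw [he]
  · simp
  · have he : g0 - mneg F u + max (a - s0 F u) 0 - (g0 - mneg F u + max (b - s0 F u) 0)
        = max (a - s0 F u) 0 - max (b - s0 F u) 0 := by ring
    rw [he]
    calc |max (a - s0 F u) 0 - max (b - s0 F u) 0| ≤ |a - s0 F u - (b - s0 F u)| :=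
          abs_max_sub_max_le_abs (a - s0 F u) (b - s0 F u) 0
      _ = |a - b| := by ring_nf

lemma hasDerivAt_Vr {t u : ℝ} (h : Phi F u ≠ (t : EReal)) :
    HasDerivAt (fun x => Vr F g0 x u)
      (if Phi F u < (t : EReal) then 1 else 0) t := by
  by_cases h1 : Phi F u = ⊥
  · have : Phi F u < (t : EReal) := h1 ▸ bot_lt_iff_ne_bot.2 (by simp)
    rw [if_pos this]
    have he : (fun x => Vr F g0 x u) = fun x => x + g0 := by
      funext x; unfold Vr; rw [if_pos h1]
    rw [he]
    simpa using (hasDerivAt_id t).add_const g0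
  · by_cases h2 : Phi F u = ⊤
    · have : ¬ Phi F u < (t : EReal) := by
        rw [h2]; exact not_lt.2 le_top
      rw [if_neg this]
      have he : (fun x => Vr F g0 x u) = fun _ => g0 := by
        funext x; unfold Vr; rw [if_neg h1, if_pos h2]
      rw [he]
      exact hasDerivAt_const t g0
    · have hcoe : ((s0 F u : ℝ) : EReal) = Phi F u := EReal.coe_toReal h2 h1
      have he : (fun x => Vr F g0 x u) = fun x => g0 - mneg F u + max (x - s0 F u) 0 := by
        funext x; unfold Vr; rw [if_neg h1, if_neg h2]
      rw [he]
      have hst : s0 F u ≠ t := by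
        intro hc
        exact h (by rw [← hcoe, hc])
      rcases lt_or_gt_of_ne hst with hlt | hgt
      · have hP : Phi F u < (t : EReal) := by
          rw [← hcoe]; exact_mod_cast hlt
        rw [if_pos hP]
        have hev : (fun x => g0 - mneg F u + max (x - s0 F u) 0)
            =ᶠ[nhds t] fun x => g0 - mneg F u + (x - s0 F u) := by
          filter_upwards [Ioi_mem_nhds hlt] with x (hx : s0 F u < x)
          rw [max_eq_left (by linarith)]
        refine HasDerivAt.congr_of_eventuallyEq ?_ hev
        simpa using ((hasDerivAt_id t).sub_const (s0 F u)).const_add (g0 - mneg F u)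
      · have hP : ¬ Phi F u < (t : EReal) := by
          rw [← hcoe]; exact_mod_cast not_lt.2 hgt.le
        rw [if_neg hP]
        have hev : (fun x => g0 - mneg F u + max (x - s0 F u) 0)
            =ᶠ[nhds t] fun _ => g0 - mneg F u := by
          filter_upwards [Iio_mem_nhds hgt] with x (hx : x < s0 F u)
          rw [max_eq_right (by linarith), add_zero]
        refine HasDerivAt.congr_of_eventuallyEq ?_ hev
        exact hasDerivAt_const t _

end Maps

section Meas

variable {F : ℝ → ℝ} {g0 : ℝ}

lemma meas_phi : Measurable (Phi F) := phi_mono.measurable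

lemma meas_s0 : Measurable (s0 F) := measurable_ereal_toReal.comp meas_phi

lemma meas_mneg : Measurable (mneg F) := (meas_s0.neg).max measurable_const

lemma measSet_bot : MeasurableSet {u : ℝ | Phi F u = ⊥} :=
  meas_phi (measurableSet_singleton ⊥)

lemma measSet_top : MeasurableSet {u : ℝ | Phi F u = ⊤} :=
  meas_phi (measurableSet_singleton ⊤)

lemma meas_Vr (t : ℝ) : Measurable (fun u => Vr F g0 t u) := by
  unfold Vr
  refine Measurable.ite measSet_bot measurable_const ?_
  refine Measurable.ite measSet_top measurable_const ?_
  exact (measurable_const.sub meas_mneg).add ((meas_s0.const_sub t).max measurable_const)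

lemma meas_emap : Measurable (emap F g0) := by
  apply measurable_pi_lambda
  intro i
  unfold emap
  simp only [apply_ite (fun f : Fin 2 → EReal => f i)]
  refine Measurable.ite measSet_bot measurable_const ?_
  refine Measurable.ite measSet_top measurable_const ?_
  fin_cases i
  · simp only [Matrix.cons_val_zero]
    exact measurable_coe_real_ereal.comp ((measurable_const.sub meas_s0).sub meas_mneg)
  · simp only [Matrix.cons_val_one, Matrix.head_cons]
    exact measurable_coe_real_ereal.comp (measurable_const.sub meas_mneg)

lemma meas_emap' : Measurable (emap' F g0) := by
  apply measurable_pi_lambda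
  intro i
  unfold emap'
  fin_cases i
  · simp only [Matrix.cons_val_zero]
    exact (measurable_const.sub meas_s0).sub meas_mneg
  · simp only [Matrix.cons_val_one, Matrix.head_cons]
    exact measurable_const.sub meas_mneg

end Meas

section MeasureLemma

variable {F : ℝ → ℝ}

lemma phi_eq_subset_singleton (hFmono : Monotone F) (hFcont : Continuous F) (t : ℝ) :
    {u : ℝ | Phi F u = (t : EReal)} ⊆ {F t} := by
  intro u hu
  have hu' : Phi F u = (t : EReal) := hu
  have h1 : ∀ v, v < t → F v ≤ u := by
    intro v hv
    exact le_of_lt_phi (by rw [hu']; exact_mod_cast hv)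
  have h2 : ∀ v, t < v → u < F v := by
    intro v hv
    exact lt_of_phi_lt hFmono (by rw [hu']; exact_mod_cast hv)
  have hle : F t ≤ u := by
    have htt : Filter.Tendsto F (nhdsWithin t (Set.Iio t)) (nhds (F t)) :=
      (hFcont.continuousAt).continuousWithinAt
    refine le_of_tendsto htt ?_
    filter_upwards [self_mem_nhdsWithin] with v hv using h1 v hv
  have hge : u ≤ F t := by
    have htt : Filter.Tendsto F (nhdsWithin t (Set.Ioi t)) (nhds (F t)) :=
      (hFcont.continuousAt).continuousWithinAt
    refine ge_of_tendsto htt ?_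
    filter_upwards [self_mem_nhdsWithin] with v hv using (h2 v hv).le
  exact le_antisymm hge hle

lemma ae_phi_ne (hFmono : Monotone F) (hFcont : Continuous F) (t : ℝ) :
    ∀ᵐ u ∂(volume.restrict (Set.Ioo (0:ℝ) 1)), Phi F u ≠ (t : EReal) := by
  have h0 : volume {u : ℝ | Phi F u = (t : EReal)} = 0 :=
    measure_mono_null (phi_eq_subset_singleton hFmono hFcont t) (measure_singleton _)
  have : ∀ᵐ u ∂(volume : Measure ℝ), Phi F u ≠ (t : EReal) := by
    rw [MeasureTheory.ae_iff]
    simpa using h0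
  exact ae_restrict_of_ae this

lemma measure_phi_lt (hFmono : Monotone F) (hFcont : Continuous F)
    (hF0 : ∀ v, 0 ≤ F v) (hF1 : ∀ v, F v ≤ 1) (t : ℝ) :
    volume ({u : ℝ | Phi F u < (t : EReal)} ∩ Set.Ioo 0 1) = ENNReal.ofReal (F t) := by
  apply le_antisymm
  · have hsub : {u : ℝ | Phi F u < (t : EReal)} ∩ Set.Ioo 0 1 ⊆ Set.Ioo 0 (F t) := by
      rintro u ⟨hu, h0, _⟩
      exact ⟨h0, lt_of_phi_lt hFmono hu⟩
    calc volume ({u : ℝ | Phi F u < (t : EReal)} ∩ Set.Ioo 0 1)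
        ≤ volume (Set.Ioo 0 (F t)) := measure_mono hsub
      _ = ENNReal.ofReal (F t) := by rw [Real.volume_Ioo, sub_zero]
  · have key : ∀ t' < t,
        ENNReal.ofReal (F t') ≤ volume ({u : ℝ | Phi F u < (t : EReal)} ∩ Set.Ioo 0 1) := by
      intro t' ht'
      have hsub : Set.Ioo 0 (F t') ⊆ {u : ℝ | Phi F u < (t : EReal)} ∩ Set.Ioo 0 1 := by
        rintro u ⟨h0, h1⟩
        exact ⟨lt_of_le_of_lt (phi_le h1) (by exact_mod_cast ht'),
          h0, lt_of_lt_of_le h1 (hF1 t')⟩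
      calc ENNReal.ofReal (F t') = volume (Set.Ioo 0 (F t')) := by
            rw [Real.volume_Ioo, sub_zero]
        _ ≤ _ := measure_mono hsub
    have htt : Filter.Tendsto (fun t' => ENNReal.ofReal (F t'))
        (nhdsWithin t (Set.Iio t)) (nhds (ENNReal.ofReal (F t))) :=
      ((ENNReal.continuous_ofReal.comp hFcont).continuousAt).continuousWithinAt
    refine le_of_tendsto htt ?_
    filter_upwards [self_mem_nhdsWithin] with t' ht' using key t' ht'

lemma integral_indicator_lt (hFmono : Monotone F) (hFcont : Continuous F)
    (hF0 : ∀ v, 0 ≤ F v) (hF1 : ∀ v, F v ≤ 1) (t : ℝ) :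
    ∫ u in Set.Ioo (0:ℝ) 1, (if Phi F u < (t : EReal) then (1:ℝ) else 0) = F t := by
  have hA : MeasurableSet {u : ℝ | Phi F u < (t : EReal)} := meas_phi measurableSet_Iio
  have he : (fun u => if Phi F u < (t : EReal) then (1:ℝ) else 0)
      = Set.indicator {u : ℝ | Phi F u < (t : EReal)} (fun _ => (1:ℝ)) := by
    funext u
    rw [Set.indicator_apply]
    rfl
  rw [he, MeasureTheory.setIntegral_indicator hA, MeasureTheory.setIntegral_const,
    smul_eq_mul, mul_one, measureReal_def, Set.inter_comm, measure_phi_lt hFmono hFcont hF0 hF1 t,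
    ENNReal.toReal_ofReal (hF0 t)]

end MeasureLemma

section MainG

variable {F : ℝ → ℝ} {g0 : ℝ}

lemma Vr_zero (u : ℝ) : Vr F g0 0 u = g0 := by
  unfold Vr
  split_ifs with h1 h2
  · exact zero_add g0
  · rfl
  · unfold mneg
    rw [zero_sub]
    ring

lemma integrable_Vr (t : ℝ) :
    Integrable (fun u => Vr F g0 t u) (volume.restrict (Set.Ioo (0:ℝ) 1)) := by
  haveI : IsProbabilityMeasure (volume.restrict (Set.Ioo (0:ℝ) 1)) :=
    ⟨by simp [Measure.restrict_apply_univ, Real.volume_Ioo]⟩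
  refine Integrable.mono' (integrable_const (|g0| + |t|)) (meas_Vr t).aestronglyMeasurable ?_
  exact Filter.Eventually.of_forall fun u => by
    simpa [Real.norm_eq_abs] using abs_Vr_le (F := F) (g0 := g0) t u

lemma hasDerivAt_G (hFmono : Monotone F) (hFcont : Continuous F)
    (hF0 : ∀ v, 0 ≤ F v) (hF1 : ∀ v, F v ≤ 1) (t₀ : ℝ) :
    HasDerivAt (fun t => ∫ u in Set.Ioo (0:ℝ) 1, Vr F g0 t u) (F t₀) t₀ := by
  haveI : IsProbabilityMeasure (volume.restrict (Set.Ioo (0:ℝ) 1)) :=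
    ⟨by simp [Measure.restrict_apply_univ, Real.volume_Ioo]⟩
  have hnnabs : Real.nnabs (1:ℝ) = 1 := by simp
  have key := hasDerivAt_integral_of_dominated_loc_of_lip
    (μ := volume.restrict (Set.Ioo (0:ℝ) 1))
    (F := fun t u => Vr F g0 t u)
    (F' := fun u => if Phi F u < (t₀ : EReal) then (1:ℝ) else 0)
    (x₀ := t₀) (bound := fun _ => (1:ℝ)) (s := Set.univ) Filter.univ_mem
    (Filter.Eventually.of_forall fun x => (meas_Vr x).aestronglyMeasurable)
    (integrable_Vr t₀)
    (by
      refine Measurable.aestronglyMeasurable ?_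
      exact Measurable.ite (meas_phi measurableSet_Iio) measurable_const measurable_const)
    (Filter.Eventually.of_forall fun u => by
      rw [hnnabs]
      exact (lipschitz_Vr u).lipschitzOnWith)
    (integrable_const 1)
    (by
      filter_upwards [ae_phi_ne hFmono hFcont t₀] with u hu
      exact hasDerivAt_Vr hu)
  have h2 := key.2
  rwa [integral_indicator_lt hFmono hFcont hF0 hF1 t₀] at h2

lemma G_eq_g {g : ℝ → ℝ} (hconv : ConvexOn ℝ Set.univ g) (hg : Differentiable ℝ g)
    (hF0 : ∀ v, 0 ≤ deriv g v) (hF1 : ∀ v, deriv g v ≤ 1) (t : ℝ) :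
    ∫ u in Set.Ioo (0:ℝ) 1, Vr (deriv g) (g 0) t u = g t := by
  haveI : IsProbabilityMeasure (volume.restrict (Set.Ioo (0:ℝ) 1)) :=
    ⟨by simp [Measure.restrict_apply_univ, Real.volume_Ioo]⟩
  have hFmono : Monotone (deriv g) := monotoneOn_univ.1 (hconv.monotoneOn_deriv fun x _ => hg x)
  have hFcont : Continuous (deriv g) := continuous_deriv_of_convex hconv hg
  have hG : ∀ s, HasDerivAt (fun t => ∫ u in Set.Ioo (0:ℝ) 1, Vr (deriv g) (g 0) t u)
      (deriv g s) s := fun s => hasDerivAt_G hFmono hFcont hF0 hF1 s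
  have hdiff2 : Differentiable ℝ
      (fun s => (∫ u in Set.Ioo (0:ℝ) 1, Vr (deriv g) (g 0) s u) - g s) :=
    fun s => ((hG s).sub (hg s).hasDerivAt).differentiableAt
  have hzero : ∀ s, deriv
      (fun s => (∫ u in Set.Ioo (0:ℝ) 1, Vr (deriv g) (g 0) s u) - g s) s = 0 := by
    intro s
    exact (HasDerivAt.deriv ((hG s).sub (hg s).hasDerivAt)).trans (sub_self _)
  have hconst := is_const_of_deriv_eq_zero hdiff2 hzero t 0
  have hG0 : (∫ u in Set.Ioo (0:ℝ) 1, Vr (deriv g) (g 0) 0 u) = g 0 := by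
    have hv : ∀ u : ℝ, Vr (deriv g) (g 0) 0 u = g 0 := fun u => Vr_zero u
    simp only [hv]
    simp [MeasureTheory.setIntegral_const, Real.volume_Ioo]
  have := hconst
  simp only [hG0] at this
  linarith

end MainG

section Wlem

def cmap (t : ℝ) : Fin 2 → ℝ := fun i => if i = 0 then t else 0

lemma cmap_eq_smul : cmap = fun t => t • cmap 1 := by
  funext t i
  simp only [cmap, Pi.smul_apply, smul_eq_mul]
  split_ifs
  · ring
  · ring

variable {w : (Fin 2 → ℝ) → ℝ}

def gw (w : (Fin 2 → ℝ) → ℝ) (t : ℝ) : ℝ := w (cmap t)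

lemma gw_diff (hdiff : Differentiable ℝ w) : Differentiable ℝ (gw w) := by
  have : Differentiable ℝ cmap := by
    rw [cmap_eq_smul]
    exact differentiable_id.smul_const (cmap 1)
  exact hdiff.comp this

lemma gw_convex (hw : IsCWF w) : ConvexOn ℝ Set.univ (gw w) := by
  refine ⟨convex_univ, ?_⟩
  intro x _ y _ a b ha hb hab
  have hcm : cmap (a • x + b • y) = a • cmap x + b • cmap y := by
    funext i
    simp only [cmap, Pi.add_apply, Pi.smul_apply, smul_eq_mul]
    split_ifs
    · rfl
    · ring
  have := hw.2.2.2 (Set.mem_univ (cmap x)) (Set.mem_univ (cmap y)) ha hb hab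
  unfold gw
  rw [hcm]
  exact this

lemma gw_translate (hw : IsCWF w) (μ : Fin 2 → ℝ) : w μ = gw w (μ 0 - μ 1) + μ 1 := by
  have hμ : cmap (μ 0 - μ 1) + (fun _ => μ 1) = μ := by
    funext i
    fin_cases i
    · simp [cmap]
    · simp [cmap]
  calc w μ = w (cmap (μ 0 - μ 1) + fun _ => μ 1) := by rw [hμ]
    _ = w (cmap (μ 0 - μ 1)) + μ 1 := hw.2.1 _ _
    _ = gw w (μ 0 - μ 1) + μ 1 := rfl

lemma gw_mono (hw : IsCWF w) : Monotone (gw w) := by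
  intro t t' h
  apply hw.1
  intro i
  simp only [cmap]
  split_ifs
  · exact h
  · exact le_refl 0

lemma gw_add_one (hw : IsCWF w) (t : ℝ) : gw w (t + 1) ≤ gw w t + 1 := by
  have h1 : cmap (t + 1) ≤ cmap t + (fun _ => (1:ℝ)) := by
    intro i
    simp only [cmap, Pi.add_apply]
    split_ifs
    · exact le_refl _
    · norm_num
  calc gw w (t+1) = w (cmap (t+1)) := rfl
    _ ≤ w (cmap t + fun _ => (1:ℝ)) := hw.1 _ _ h1
    _ = gw w t + 1 := hw.2.1 _ _

lemma deriv_gw_nonneg (hw : IsCWF w) (hdiff : Differentiable ℝ w) (t : ℝ) :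
    0 ≤ deriv (gw w) t := by
  have hslope : slope (gw w) (t - 1) t ≤ deriv (gw w) t :=
    (gw_convex hw).slope_le_deriv (Set.mem_univ _) (Set.mem_univ _) (by linarith)
      (gw_diff hdiff t)
  have h0 : 0 ≤ slope (gw w) (t - 1) t := by
    rw [slope_def_field]
    apply div_nonneg
    · have := gw_mono hw (show t - 1 ≤ t by linarith)
      linarith
    · linarith
  linarith

lemma deriv_gw_le_one (hw : IsCWF w) (hdiff : Differentiable ℝ w) (t : ℝ) :
    deriv (gw w) t ≤ 1 := by
  have hslope : deriv (gw w) t ≤ slope (gw w) t (t + 1) :=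
    (gw_convex hw).deriv_le_slope (Set.mem_univ _) (Set.mem_univ _) (by linarith)
      (gw_diff hdiff t)
  have h1 : slope (gw w) t (t + 1) ≤ 1 := by
    rw [slope_def_field]
    have := gw_add_one hw t
    have he : t + 1 - t = 1 := by ring
    rw [he, div_one]
    linarith
  linarith

lemma measurable_value (μ : Fin 2 → ℝ) :
    Measurable (fun ε : Fin 2 → EReal =>
      (max ((μ 0 : EReal) + ε 0) ((μ 1 : EReal) + ε 1)).toReal) := by
  have h0 : Measurable (fun ε : Fin 2 → EReal => (μ 0 : EReal) + ε 0) := by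
    have hm : Monotone (fun x : EReal => (μ 0 : EReal) + x) :=
      fun a b h => add_le_add le_rfl h
    exact hm.measurable.comp (measurable_pi_apply 0)
  have h1 : Measurable (fun ε : Fin 2 → EReal => (μ 1 : EReal) + ε 1) := by
    have hm : Monotone (fun x : EReal => (μ 1 : EReal) + x) :=
      fun a b h => add_le_add le_rfl h
    exact hm.measurable.comp (measurable_pi_apply 1)
  exact measurable_ereal_toReal.comp (h0.max h1)

lemma emap_prop (F : ℝ → ℝ) (g0 : ℝ) (u : ℝ) :
    emap F g0 u 0 ≠ ⊤ ∧ emap F g0 u 1 ≠ ⊤ ∧ (emap F g0 u 0 ≠ ⊥ ∨ emap F g0 u 1 ≠ ⊥) := by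
  unfold emap
  split_ifs with h1 h2
  · simp only [Matrix.cons_val_zero, Matrix.cons_val_one, Matrix.head_cons]
    exact ⟨EReal.coe_ne_top _, bot_ne_top, Or.inl (EReal.coe_ne_bot _)⟩
  · simp only [Matrix.cons_val_zero, Matrix.cons_val_one, Matrix.head_cons]
    exact ⟨bot_ne_top, EReal.coe_ne_top _, Or.inr (EReal.coe_ne_bot _)⟩
  · simp only [Matrix.cons_val_zero, Matrix.cons_val_one, Matrix.head_cons]
    exact ⟨EReal.coe_ne_top _, EReal.coe_ne_top _, Or.inl (EReal.coe_ne_bot _)⟩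

lemma measurableSet_prop :
    MeasurableSet {ε : Fin 2 → EReal |
      ε 0 ≠ ⊤ ∧ ε 1 ≠ ⊤ ∧ (ε 0 ≠ ⊥ ∨ ε 1 ≠ ⊥)} := by
  have h0t : MeasurableSet {ε : Fin 2 → EReal | ε 0 ≠ ⊤} :=
    ((measurable_pi_apply 0) (measurableSet_singleton ⊤)).compl
  have h1t : MeasurableSet {ε : Fin 2 → EReal | ε 1 ≠ ⊤} :=
    ((measurable_pi_apply 1) (measurableSet_singleton ⊤)).compl
  have h0b : MeasurableSet {ε : Fin 2 → EReal | ε 0 ≠ ⊥} :=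
    ((measurable_pi_apply 0) (measurableSet_singleton ⊥)).compl
  have h1b : MeasurableSet {ε : Fin 2 → EReal | ε 1 ≠ ⊥} :=
    ((measurable_pi_apply 1) (measurableSet_singleton ⊥)).compl
  exact h0t.inter (h1t.inter (h0b.union h1b))

lemma part1 (hw : IsCWF w) (hdiff : Differentiable ℝ w) :
    ∃ θ : Measure (Fin 2 → EReal), IsProbabilityMeasure θ ∧
      (∀ᵐ ε ∂θ, ε 0 ≠ ⊤ ∧ ε 1 ≠ ⊤ ∧ (ε 0 ≠ ⊥ ∨ ε 1 ≠ ⊥)) ∧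
      ∀ μ : Fin 2 → ℝ,
        w μ = ∫ ε, (max ((μ 0 : EReal) + ε 0) ((μ 1 : EReal) + ε 1)).toReal ∂θ := by
  haveI : IsProbabilityMeasure (volume.restrict (Set.Ioo (0:ℝ) 1)) :=
    ⟨by simp [Measure.restrict_apply_univ, Real.volume_Ioo]⟩
  set g := gw w with hgdef
  set F := deriv g with hFdef
  refine ⟨(volume.restrict (Set.Ioo (0:ℝ) 1)).map (emap F (g 0)), ?_, ?_, ?_⟩
  · exact Measure.isProbabilityMeasure_map meas_emap.aemeasurable
  · rw [MeasureTheory.ae_map_iff meas_emap.aemeasurable measurableSet_prop]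
    exact Filter.Eventually.of_forall fun u => emap_prop F (g 0) u
  · intro μ
    rw [MeasureTheory.integral_map meas_emap.aemeasurable
      (measurable_value μ).aestronglyMeasurable]
    have heq : ∀ u : ℝ,
        (max ((μ 0 : EReal) + emap F (g 0) u 0) ((μ 1 : EReal) + emap F (g 0) u 1)).toReal
          = μ 1 + Vr F (g 0) (μ 0 - μ 1) u := fun u => eval_emap μ u
    simp only [heq]
    rw [MeasureTheory.integral_add (integrable_const (μ 1)) (integrable_Vr (μ 0 - μ 1))]
    rw [MeasureTheory.integral_const]
    rw [G_eq_g (gw_convex hw) (gw_diff hdiff)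
      (fun v => deriv_gw_nonneg hw hdiff v) (fun v => deriv_gw_le_one hw hdiff v)]
    rw [gw_translate hw μ]
    simp
    ring

end Wlem

section Helper

lemma lintegral_Ioi_le {f : ℝ → ℝ} (hf : Continuous f) (hnn : ∀ v, 0 ≤ f v) {C : ℝ}
    (hC : ∀ n : ℕ, (∫ v in Set.Ioc (0:ℝ) (n:ℝ), f v) ≤ C) :
    ∫⁻ v in Set.Ioi (0:ℝ), ENNReal.ofReal (f v) ≤ ENNReal.ofReal C := by
  have hstep : ∀ n : ℕ, ∫⁻ v in Set.Ioc (0:ℝ) (n:ℝ), ENNReal.ofReal (f v)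
      ≤ ENNReal.ofReal C := by
    intro n
    have hint : IntegrableOn f (Set.Ioc (0:ℝ) (n:ℝ)) :=
      (intervalIntegrable_iff_integrableOn_Ioc_of_le (by positivity)).1
        (hf.intervalIntegrable 0 n)
    rw [← MeasureTheory.ofReal_integral_eq_lintegral_ofReal hint
      (Filter.Eventually.of_forall fun v => hnn v)]
    exact ENNReal.ofReal_le_ofReal (hC n)
  have hset : Set.Ioi (0:ℝ) = ⋃ n : ℕ, Set.Ioc (0:ℝ) (n:ℝ) := by
    ext v
    simp only [Set.mem_Ioi, Set.mem_iUnion, Set.mem_Ioc]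
    constructor
    · intro hv; exact ⟨Nat.ceil v, hv, Nat.le_ceil v⟩
    · rintro ⟨n, hv, _⟩; exact hv
  have hdir : Directed (· ⊆ ·) (fun n : ℕ => Set.Ioc (0:ℝ) (n:ℝ)) := by
    apply Monotone.directed_le
    intro a b hab
    exact Set.Ioc_subset_Ioc_right (by exact_mod_cast hab)
  rw [hset, MeasureTheory.setLIntegral_iUnion_of_directed _ hdir]
  exact iSup_le hstep

lemma ftc_deriv {g : ℝ → ℝ} (hg : Differentiable ℝ g) (hcont : Continuous (deriv g))
    (a b : ℝ) : ∫ v in a..b, deriv g v = g b - g a :=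
  intervalIntegral.integral_eq_sub_of_hasDerivAt (fun x _ => (hg x).hasDerivAt)
    (hcont.intervalIntegrable a b)

end Helper

section Part2

variable {g : ℝ → ℝ} {b0 b1 : ℝ}

lemma phi_ne_bot_top (hg : Differentiable ℝ g) (hcont : Continuous (deriv g))
    (hFmono : Monotone (deriv g))
    (hb0 : ∀ t, t + b0 ≤ g t) (hb1 : ∀ t, b1 ≤ g t)
    {u : ℝ} (hu : u ∈ Set.Ioo (0:ℝ) 1) :
    Phi (deriv g) u ≠ ⊥ ∧ Phi (deriv g) u ≠ ⊤ := by
  constructor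
  · intro hbot
    have hall : ∀ v : ℝ, u < deriv g v := by
      intro v
      by_contra hc
      push_neg at hc
      have h := le_phi hFmono hc
      rw [hbot, le_bot_iff] at h
      exact EReal.coe_ne_bot v h
    have key : ∀ T : ℝ, 0 ≤ T → u * T ≤ g 0 - g (-T) := by
      intro T hT
      have hftc : ∫ v in (-T)..(0:ℝ), deriv g v = g 0 - g (-T) := ftc_deriv hg hcont _ _
      have hmono : (∫ _ in (-T)..(0:ℝ), u) ≤ ∫ v in (-T)..(0:ℝ), deriv g v := by
        apply intervalIntegral.integral_mono_on (by linarith)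
          intervalIntegrable_const (hcont.intervalIntegrable _ _)
        exact fun x _ => (hall x).le
      rw [intervalIntegral.integral_const, smul_eq_mul] at hmono
      have he : (0 - -T) * u = u * T := by ring
      rw [he] at hmono
      linarith
    set T := max ((g 0 - b1)/u + 1) 0 with hTdef
    have hT0 : 0 ≤ T := le_max_right _ _
    have hTa : (g 0 - b1)/u + 1 ≤ T := le_max_left _ _
    have h1 := key T hT0
    have h2 := hb1 (-T)
    have h3 : u * ((g 0 - b1)/u + 1) ≤ u * T :=
      mul_le_mul_of_nonneg_left hTa hu.1.le
    have hu0 : u ≠ 0 := ne_of_gt hu.1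
    have h4 : u * ((g 0 - b1)/u + 1) = (g 0 - b1) + u := by
      rw [mul_add, mul_one, mul_div_cancel₀ _ hu0]
    nlinarith [hu.1]
  · intro htop
    have hall : ∀ v : ℝ, deriv g v ≤ u := by
      intro v
      by_contra hc
      push_neg at hc
      have h := phi_le hc
      rw [htop, top_le_iff] at h
      exact EReal.coe_ne_top v h
    have key : ∀ T : ℝ, 0 ≤ T → g T - g 0 ≤ u * T := by
      intro T hT
      have hftc : ∫ v in (0:ℝ)..T, deriv g v = g T - g 0 := ftc_deriv hg hcont _ _
      have hmono : (∫ v in (0:ℝ)..T, deriv g v) ≤ ∫ _ in (0:ℝ)..T, u := by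
        apply intervalIntegral.integral_mono_on hT
          (hcont.intervalIntegrable _ _) intervalIntegrable_const
        exact fun x _ => hall x
      rw [intervalIntegral.integral_const, smul_eq_mul] at hmono
      have he : (T - 0) * u = u * T := by ring
      rw [he] at hmono
      linarith
    have h1u : 0 < 1 - u := by linarith [hu.2]
    set T := max ((g 0 - b0)/(1-u) + 1) 0 with hTdef
    have hT0 : 0 ≤ T := le_max_right _ _
    have hTa : (g 0 - b0)/(1-u) + 1 ≤ T := le_max_left _ _
    have h1 := key T hT0
    have h2 := hb0 T
    have h3 : (1-u) * ((g 0 - b0)/(1-u) + 1) ≤ (1-u) * T :=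
      mul_le_mul_of_nonneg_left hTa h1u.le
    have h4 : (1-u) * ((g 0 - b0)/(1-u) + 1) = (g 0 - b0) + (1-u) := by
      rw [mul_add, mul_one, mul_div_cancel₀ _ (ne_of_gt h1u)]
    nlinarith

lemma integrable_s0 (hg : Differentiable ℝ g) (hcont : Continuous (deriv g))
    (hFmono : Monotone (deriv g)) (hF0 : ∀ v, 0 ≤ deriv g v) (hF1 : ∀ v, deriv g v ≤ 1)
    (hb0 : ∀ t, t + b0 ≤ g t) (hb1 : ∀ t, b1 ≤ g t) :
    Integrable (s0 (deriv g)) (volume.restrict (Set.Ioo (0:ℝ) 1)) := by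
  set F := deriv g with hF
  set μ01 := volume.restrict (Set.Ioo (0:ℝ) 1) with hμ01
  have hmeas : Measurable (s0 F) := meas_s0
  have hmeaspos : Measurable fun u => max (s0 F u) 0 := hmeas.max measurable_const
  have hmeasneg : Measurable fun u => max (-(s0 F u)) 0 := hmeas.neg.max measurable_const
  -- positive part
  have hpos : ∫⁻ u, ENNReal.ofReal (max (s0 F u) 0) ∂μ01
      ≤ ENNReal.ofReal (max (g 0 - b0) 0) := by
    have layer := MeasureTheory.lintegral_eq_lintegral_meas_lt μ01
      (f := fun u => max (s0 F u) 0)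
      (Filter.Eventually.of_forall fun u => le_max_right _ _) hmeaspos.aemeasurable
    rw [layer]
    have hb : ∀ t ∈ Set.Ioi (0:ℝ), μ01 {a | t < max (s0 F a) 0}
        ≤ ENNReal.ofReal (1 - F t) := by
      intro t ht
      have htpos : (0:ℝ) < t := ht
      have hsetm : MeasurableSet {a : ℝ | t < max (s0 F a) 0} :=
        hmeaspos measurableSet_Ioi
      rw [hμ01, Measure.restrict_apply hsetm]
      have hsubset : {a : ℝ | t < max (s0 F a) 0} ∩ Set.Ioo 0 1 ⊆ Set.Ico (F t) 1 := by
        rintro a ⟨ha, ha01⟩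
        simp only [Set.mem_setOf_eq] at ha
        have hst : t < s0 F a := by
          rcases max_cases (s0 F a) 0 with ⟨he, _⟩ | ⟨he, _⟩
          · rwa [he] at ha
          · rw [he] at ha; linarith
        have hne := phi_ne_bot_top hg hcont hFmono hb0 hb1 ha01
        have hcoe : ((s0 F a : ℝ) : EReal) = Phi F a := EReal.coe_toReal hne.2 hne.1
        have hlt : (t : EReal) < Phi F a := by
          rw [← hcoe]; exact_mod_cast hst
        exact ⟨le_of_lt_phi hlt, ha01.2⟩
      calc volume ({a : ℝ | t < max (s0 F a) 0} ∩ Set.Ioo 0 1)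
          ≤ volume (Set.Ico (F t) 1) := measure_mono hsubset
        _ = ENNReal.ofReal (1 - F t) := Real.volume_Ico
    calc ∫⁻ t in Set.Ioi (0:ℝ), μ01 {a | t < max (s0 F a) 0}
        ≤ ∫⁻ t in Set.Ioi (0:ℝ), ENNReal.ofReal (1 - F t) :=
          MeasureTheory.setLIntegral_mono
            (ENNReal.measurable_ofReal.comp ((continuous_const.sub hcont).measurable)) hb
      _ ≤ ENNReal.ofReal (max (g 0 - b0) 0) := by
          apply lintegral_Ioi_le (continuous_const.sub hcont)
            (fun v => by simp only [Pi.sub_apply]; linarith [hF1 v])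
          intro n
          have hn : (0:ℝ) ≤ (n:ℝ) := by positivity
          rw [← intervalIntegral.integral_of_le hn]
          simp only [Pi.sub_apply]
          rw [intervalIntegral.integral_sub (intervalIntegrable_const)
            (hcont.intervalIntegrable _ _)]
          rw [intervalIntegral.integral_const, smul_eq_mul, mul_one,
            ftc_deriv hg hcont 0 (n:ℝ)]
          have := hb0 (n:ℝ)
          have hle : (n:ℝ) - 0 - (g (n:ℝ) - g 0) ≤ g 0 - b0 := by linarith
          exact hle.trans (le_max_left _ _)
  -- negative part
  have hneg : ∫⁻ u, ENNReal.ofReal (max (-(s0 F u)) 0) ∂μ01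
      ≤ ENNReal.ofReal (max (g 0 - b1) 0) := by
    have layer := MeasureTheory.lintegral_eq_lintegral_meas_lt μ01
      (f := fun u => max (-(s0 F u)) 0)
      (Filter.Eventually.of_forall fun u => le_max_right _ _) hmeasneg.aemeasurable
    rw [layer]
    have hb : ∀ t ∈ Set.Ioi (0:ℝ), μ01 {a | t < max (-(s0 F a)) 0}
        ≤ ENNReal.ofReal (F (-t)) := by
      intro t ht
      have htpos : (0:ℝ) < t := ht
      have hsetm : MeasurableSet {a : ℝ | t < max (-(s0 F a)) 0} :=
        hmeasneg measurableSet_Ioi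
      rw [hμ01, Measure.restrict_apply hsetm]
      have hsubset : {a : ℝ | t < max (-(s0 F a)) 0} ∩ Set.Ioo 0 1
          ⊆ Set.Ioo 0 (F (-t)) := by
        rintro a ⟨ha, ha01⟩
        simp only [Set.mem_setOf_eq] at ha
        have hst : s0 F a < -t := by
          rcases max_cases (-(s0 F a)) 0 with ⟨he, _⟩ | ⟨he, _⟩
          · rw [he] at ha; linarith
          · rw [he] at ha; linarith
        have hne := phi_ne_bot_top hg hcont hFmono hb0 hb1 ha01
        have hcoe : ((s0 F a : ℝ) : EReal) = Phi F a := EReal.coe_toReal hne.2 hne.1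
        have hlt : Phi F a < ((-t : ℝ) : EReal) := by
          rw [← hcoe]; exact_mod_cast hst
        exact ⟨ha01.1, lt_of_phi_lt hFmono hlt⟩
      calc volume ({a : ℝ | t < max (-(s0 F a)) 0} ∩ Set.Ioo 0 1)
          ≤ volume (Set.Ioo 0 (F (-t))) := measure_mono hsubset
        _ = ENNReal.ofReal (F (-t)) := by rw [Real.volume_Ioo, sub_zero]
    calc ∫⁻ t in Set.Ioi (0:ℝ), μ01 {a | t < max (-(s0 F a)) 0}
        ≤ ∫⁻ t in Set.Ioi (0:ℝ), ENNReal.ofReal (F (-t)) :=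
          MeasureTheory.setLIntegral_mono
            (ENNReal.measurable_ofReal.comp ((hcont.comp continuous_neg).measurable)) hb
      _ ≤ ENNReal.ofReal (max (g 0 - b1) 0) := by
          apply lintegral_Ioi_le (hcont.comp continuous_neg) (fun v => hF0 _)
          intro n
          have hn : (0:ℝ) ≤ (n:ℝ) := by positivity
          rw [← intervalIntegral.integral_of_le hn]
          simp only [Function.comp_apply]
          rw [intervalIntegral.integral_comp_neg (fun v => deriv g v)]
          rw [neg_zero, ftc_deriv hg hcont (-(n:ℝ)) 0]
          have := hb1 (-(n:ℝ))
          have hle : g 0 - g (-(n:ℝ)) ≤ g 0 - b1 := by linarith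
          exact hle.trans (le_max_left _ _)
  constructor
  · exact hmeas.aestronglyMeasurable
  · show (∫⁻ u, (‖s0 F u‖₊ : ℝ≥0∞) ∂μ01) < ⊤
    have habs : ∀ u : ℝ, (‖s0 F u‖₊ : ℝ≥0∞)
        = ENNReal.ofReal (max (s0 F u) 0) + ENNReal.ofReal (max (-(s0 F u)) 0) := by
      intro u
      rw [show (‖s0 F u‖₊ : ℝ≥0∞) = ENNReal.ofReal |s0 F u| from Real.enorm_eq_ofReal_abs _]
      rcases le_total 0 (s0 F u) with h | h
      · rw [abs_of_nonneg h, max_eq_left h, max_eq_right (by linarith),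
          ENNReal.ofReal_zero, add_zero]
      · rw [abs_of_nonpos h, max_eq_right h, max_eq_left (by linarith),
          ENNReal.ofReal_zero, zero_add]
    calc ∫⁻ u, (‖s0 F u‖₊ : ℝ≥0∞) ∂μ01
        = ∫⁻ u, (ENNReal.ofReal (max (s0 F u) 0)
            + ENNReal.ofReal (max (-(s0 F u)) 0)) ∂μ01 :=
          MeasureTheory.lintegral_congr habs
      _ = (∫⁻ u, ENNReal.ofReal (max (s0 F u) 0) ∂μ01)
            + ∫⁻ u, ENNReal.ofReal (max (-(s0 F u)) 0) ∂μ01 :=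
          MeasureTheory.lintegral_add_left
            (ENNReal.measurable_ofReal.comp hmeaspos) _
      _ ≤ ENNReal.ofReal (max (g 0 - b0) 0) + ENNReal.ofReal (max (g 0 - b1) 0) :=
          add_le_add hpos hneg
      _ < ⊤ := by
          exact ENNReal.add_lt_top.2 ⟨ENNReal.ofReal_lt_top, ENNReal.ofReal_lt_top⟩

lemma eval_emap' {F : ℝ → ℝ} {g0 : ℝ} {u : ℝ} (h1 : Phi F u ≠ ⊥) (h2 : Phi F u ≠ ⊤)
    (μ : Fin 2 → ℝ) :
    max (μ 0 + emap' F g0 u 0) (μ 1 + emap' F g0 u 1)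
      = μ 1 + Vr F g0 (μ 0 - μ 1) u := by
  unfold emap' Vr
  rw [if_neg h1, if_neg h2]
  simp only [Matrix.cons_val_zero, Matrix.cons_val_one, Matrix.head_cons]
  rcases max_cases (μ 0 + (g0 - s0 F u - mneg F u)) (μ 1 + (g0 - mneg F u)) with
    ⟨he, hc⟩ | ⟨he, hc⟩
  · rw [he, max_eq_left (by linarith)]
    ring
  · rw [he, max_eq_right (by linarith)]
    ring

lemma part2 {w : (Fin 2 → ℝ) → ℝ} (hw : IsCWF w) (hdiff : Differentiable ℝ w)
    (hb : ∃ b : Fin 2 → ℝ, ∀ (μ : Fin 2 → ℝ) (i : Fin 2), μ i + b i ≤ w μ) :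
    ∃ θ : Measure (Fin 2 → ℝ), IsProbabilityMeasure θ ∧
      Integrable (fun ε : Fin 2 → ℝ => |ε 0|) θ ∧
      Integrable (fun ε : Fin 2 → ℝ => |ε 1|) θ ∧
      ∀ μ : Fin 2 → ℝ, w μ = ∫ ε, max (μ 0 + ε 0) (μ 1 + ε 1) ∂θ := by
  obtain ⟨b, hbw⟩ := hb
  haveI : IsProbabilityMeasure (volume.restrict (Set.Ioo (0:ℝ) 1)) :=
    ⟨by simp [Measure.restrict_apply_univ, Real.volume_Ioo]⟩
  set g := gw w with hgdef
  set F := deriv g with hFdef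
  have hconv := gw_convex hw
  have hgd := gw_diff hdiff
  have hF0 : ∀ v, 0 ≤ F v := fun v => deriv_gw_nonneg hw hdiff v
  have hF1 : ∀ v, F v ≤ 1 := fun v => deriv_gw_le_one hw hdiff v
  have hFmono : Monotone F := monotoneOn_univ.1 (hconv.monotoneOn_deriv fun x _ => hgd x)
  have hFcont : Continuous F := continuous_deriv_of_convex hconv hgd
  have hb0 : ∀ t, t + b 0 ≤ g t := by
    intro t
    have h := hbw (cmap t) 0
    simpa [cmap, hgdef, gw] using h
  have hb1 : ∀ t, b 1 ≤ g t := by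
    intro t
    have h := hbw (cmap t) 1
    simpa [cmap, hgdef, gw] using h
  have hs0int : Integrable (s0 F) (volume.restrict (Set.Ioo (0:ℝ) 1)) :=
    integrable_s0 hgd hFcont hFmono hF0 hF1 hb0 hb1
  have hmnegint : Integrable (mneg F) (volume.restrict (Set.Ioo (0:ℝ) 1)) := by
    refine Integrable.mono' hs0int.abs meas_mneg.aestronglyMeasurable ?_
    refine Filter.Eventually.of_forall fun u => ?_
    rw [Real.norm_eq_abs]
    unfold mneg
    rcases max_cases (-(s0 F u)) 0 with ⟨he, _⟩ | ⟨he, _⟩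
    · rw [he, abs_neg]
    · rw [he, abs_zero]
      exact abs_nonneg _
  have he0 : (fun u => emap' F (g 0) u 0) = fun u => g 0 - s0 F u - mneg F u := by
    funext u
    simp [emap']
  have he1 : (fun u => emap' F (g 0) u 1) = fun u => g 0 - mneg F u := by
    funext u
    simp [emap']
  have he0int : Integrable (fun u => emap' F (g 0) u 0)
      (volume.restrict (Set.Ioo (0:ℝ) 1)) := by
    rw [he0]
    exact ((integrable_const (g 0)).sub hs0int).sub hmnegint
  have he1int : Integrable (fun u => emap' F (g 0) u 1)
      (volume.restrict (Set.Ioo (0:ℝ) 1)) := by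
    rw [he1]
    exact (integrable_const (g 0)).sub hmnegint
  refine ⟨(volume.restrict (Set.Ioo (0:ℝ) 1)).map (emap' F (g 0)),
    Measure.isProbabilityMeasure_map meas_emap'.aemeasurable, ?_, ?_, ?_⟩
  · rw [MeasureTheory.integrable_map_measure
      ((measurable_pi_apply 0).abs.aestronglyMeasurable) meas_emap'.aemeasurable]
    exact he0int.abs
  · rw [MeasureTheory.integrable_map_measure
      ((measurable_pi_apply 1).abs.aestronglyMeasurable) meas_emap'.aemeasurable]
    exact he1int.abs
  · intro μ
    have hmeasval : Measurable fun ε : Fin 2 → ℝ => max (μ 0 + ε 0) (μ 1 + ε 1) :=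
      Measurable.max (by fun_prop) (by fun_prop)
    rw [MeasureTheory.integral_map meas_emap'.aemeasurable hmeasval.aestronglyMeasurable]
    have hcongr : Set.EqOn
        (fun u => max (μ 0 + emap' F (g 0) u 0) (μ 1 + emap' F (g 0) u 1))
        (fun u => μ 1 + Vr F (g 0) (μ 0 - μ 1) u) (Set.Ioo (0:ℝ) 1) := by
      intro u hu
      have hne := phi_ne_bot_top hgd hFcont hFmono hb0 hb1 hu
      exact eval_emap' hne.1 hne.2 μ
    rw [MeasureTheory.setIntegral_congr_fun measurableSet_Ioo hcongr]
    rw [MeasureTheory.integral_add (integrable_const (μ 1)) (integrable_Vr (μ 0 - μ 1))]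
    rw [MeasureTheory.integral_const]
    rw [G_eq_g hconv hgd hF0 hF1]
    rw [gw_translate hw μ]
    simp
    ring

end Part2

end CWAux

theorem stmt_9 (w : (Fin 2 → ℝ) → ℝ) (hw : IsCWF w) (hdiff : Differentiable ℝ w) :
    (∃ θ : Measure (Fin 2 → EReal), IsProbabilityMeasure θ ∧
      (∀ᵐ ε ∂θ, ε 0 ≠ ⊤ ∧ ε 1 ≠ ⊤ ∧ (ε 0 ≠ ⊥ ∨ ε 1 ≠ ⊥)) ∧
      ∀ μ : Fin 2 → ℝ,
        w μ = ∫ ε, (max ((μ 0 : EReal) + ε 0) ((μ 1 : EReal) + ε 1)).toReal ∂θ) ∧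
    ((∃ b : Fin 2 → ℝ, ∀ (μ : Fin 2 → ℝ) (i : Fin 2), μ i + b i ≤ w μ) →
      ∃ θ : Measure (Fin 2 → ℝ), IsProbabilityMeasure θ ∧
        Integrable (fun ε : Fin 2 → ℝ => |ε 0|) θ ∧
        Integrable (fun ε : Fin 2 → ℝ => |ε 1|) θ ∧
        ∀ μ : Fin 2 → ℝ, w μ = ∫ ε, max (μ 0 + ε 0) (μ 1 + ε 1) ∂θ) :=
  ⟨CWAux.part1 hw hdiff, fun hb => CWAux.part2 hw hdiff hb⟩
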